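/- In the marked setup below, let λ ∈ ℤ^{P*} be a nonnegative dominant marking with decomposition coefficients α_K(λ) (K ∈ 𝒥*), and let S = Σ_{K∈𝒥*} α_K(λ). Then the marked relative poset polytope R_λ(P,<,<') = Σ_{K∈𝒥*} α_K(λ)·R_{ω_K}(P,<,<') (Minkowski sum) equals the intersection of S·R(P,<,<') with the affine subspace {x ∈ ℝ^P : x_p = λ_p for all p ∈ P*}. -/

import Mathlib

open Pointwise

/-- `J` is an order ideal (lower set) with respect to the strict order relation `r`. -/
def IsLowerIdeal {P : Type*} (r : P → P → Prop) (J : Set P) : Prop :=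
  ∀ ⦃p q : P⦄, r p q → q ∈ J → p ∈ J

/-- The set of `r`-maximal elements of `J`. -/
def maxElems {P : Type*} (r : P → P → Prop) (J : Set P) : Set P :=
  {p ∈ J | ∀ q ∈ J, ¬ r p q}

/-- The 0/1 indicator vector of `A ⊆ P`, as a point of `ℝ^P`. -/
noncomputable def ind {P : Type*} (A : Set P) : P → ℝ :=
  A.indicator 1

/-- The order ideal of `(P, r)` generated by `A`. -/
def genIdeal {P : Type*} (r : P → P → Prop) (A : Set P) : Set P :=
  {p | ∃ q ∈ A, p = q ∨ r p q}

/-- The Hibi–Li operation `J1 *' J2` relative to the order `r`: the order ideal of `(P, r)`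
generated by `(J1 ∩ J2) ∩ (max_r J1 ∪ max_r J2)`. -/
def starOp {P : Type*} (r : P → P → Prop) (J1 J2 : Set P) : Set P :=
  genIdeal r ((J1 ∩ J2) ∩ (maxElems r J1 ∪ maxElems r J2))

/-- The relative poset polytope `R(P, lt, lt')`: the convex hull of the points
`1_{max_{lt'} J}` over all order ideals `J` of `(P, lt)`. -/
noncomputable def RPP {P : Type*} (lt lt' : P → P → Prop) : Set (P → ℝ) :=
  convexHull ℝ {x | ∃ J : Set P, IsLowerIdeal lt J ∧ x = ind (maxElems lt' J)}

/-- The dilation `m·Q = {m·x : x ∈ Q}`. -/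
def dilate {P : Type*} (m : ℕ) (Q : Set (P → ℝ)) : Set (P → ℝ) :=
  (fun x => (m : ℝ) • x) '' Q

/-- The order polytope of `(P, lt)`. -/
def orderPolytope {P : Type*} (lt : P → P → Prop) : Set (P → ℝ) :=
  {x | (∀ p, 0 ≤ x p ∧ x p ≤ 1) ∧ ∀ p q, lt q p → x p ≤ x q}

/-- The chain polytope of `(P, lt)`. -/
def chainPolytope {P : Type*} (lt : P → P → Prop) : Set (P → ℝ) :=
  {x | (∀ p, 0 ≤ x p) ∧ ∀ (k : ℕ) (c : Fin k → P),
    (∀ i j : Fin k, i < j → lt (c i) (c j)) → (∑ i, x (c i)) ≤ 1}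


/-- The fundamental marked relative poset polytope `R_{ω_K}(P, lt, lt')`: the convex hull
of the points `1_{max_{lt'} J}` over order ideals `J` of `(P, lt)` with `J ∩ P* = K`. -/
noncomputable def RPPfund {P : Type*} (lt lt' : P → P → Prop) (Pstar K : Set P) :
    Set (P → ℝ) :=
  convexHull ℝ
    {x | ∃ J : Set P, IsLowerIdeal lt J ∧ J ∩ Pstar = K ∧ x = ind (maxElems lt' J)}

/-- The set `𝒥*` of order ideals of the subposet `(P*, lt)`. -/
def idealsOn {P : Type*} (lt : P → P → Prop) (Pstar : Set P) : Set (Set P) :=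
  {K | K ⊆ Pstar ∧ ∀ p q : P, p ∈ Pstar → q ∈ Pstar → lt p q → q ∈ K → p ∈ K}

/-- The marked relative poset polytope for a coefficient function `α : 𝒥* → ℕ`:
the Minkowski sum `Σ_{K ∈ 𝒥*} α_K · R_{ω_K}(P, lt, lt')`. -/
noncomputable def RPPmarked {P : Type*} [Fintype P] (lt lt' : P → P → Prop)
    (Pstar : Set P) (α : Set P → ℕ) : Set (P → ℝ) :=
  ∑ K ∈ (Set.toFinite (idealsOn lt Pstar)).toFinset, dilate (α K) (RPPfund lt lt' Pstar K)


section Basic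
variable {P : Type*} {lt lt' : P → P → Prop}

lemma mem_maxElems_iff {J : Set P} {p : P} :
    p ∈ maxElems lt' J ↔ p ∈ J ∧ ∀ q ∈ J, ¬ lt' p q := Iff.rfl

lemma maxElems_subset {J : Set P} : maxElems lt' J ⊆ J := fun _ h => h.1

lemma lowerIdeal_weak (hweak : ∀ p q, lt' p q → lt p q) {J : Set P}
    (hJ : IsLowerIdeal lt J) : IsLowerIdeal lt' J :=
  fun p q h hq => hJ (hweak p q h) hq

/-- `max_{lt'} (J1 *' J2) = (J1 ∩ J2) ∩ (max_{lt'} J1 ∪ max_{lt'} J2)`. -/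
lemma maxElems_starOp (hlt'tr : ∀ a b c, lt' a b → lt' b c → lt' a c)
    {J1 J2 : Set P} (h1 : IsLowerIdeal lt' J1) :
    maxElems lt' (starOp lt' J1 J2) = (J1 ∩ J2) ∩ (maxElems lt' J1 ∪ maxElems lt' J2) := by
  set G := (J1 ∩ J2) ∩ (maxElems lt' J1 ∪ maxElems lt' J2) with hG
  have hGsub : G ⊆ starOp lt' J1 J2 := fun g hg => ⟨g, hg, Or.inl rfl⟩
  have hmax : ∀ g ∈ G, ∀ q ∈ starOp lt' J1 J2, ¬ lt' g q := by
    rintro g hg q ⟨g', hg', hq⟩ hlt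
    have hgg' : lt' g g' := by
      rcases hq with rfl | hq
      · exact hlt
      · exact hlt'tr _ _ _ hlt hq
    have hg'J1 : g' ∈ J1 := hg'.1.1
    have hg'J2 : g' ∈ J2 := hg'.1.2
    rcases hg.2 with hm | hm
    · exact hm.2 g' hg'J1 hgg'
    · exact hm.2 g' hg'J2 hgg'
  ext p
  constructor
  · rintro ⟨⟨g, hg, hp⟩, hpmax⟩
    rcases hp with rfl | hp
    · exact hg
    · exact absurd hp (hpmax g (hGsub hg))
  · intro hp
    exact ⟨hGsub hp, hmax p hp⟩

/-- Key vertex identity: `v(J1) + v(J2) = v(J1 ∪ J2) + v(J1 *' J2)` pointwise. -/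
lemma vertex_identity (hlt'tr : ∀ a b c, lt' a b → lt' b c → lt' a c)
    (hweak : ∀ p q, lt' p q → lt p q)
    {J1 J2 : Set P} (h1 : IsLowerIdeal lt J1) (h2 : IsLowerIdeal lt J2) (p : P) :
    ind (maxElems lt' J1) p + ind (maxElems lt' J2) p
      = ind (maxElems lt' (J1 ∪ J2)) p + ind (maxElems lt' (starOp lt' J1 J2)) p := by
  have h1' : IsLowerIdeal lt' J1 := lowerIdeal_weak hweak h1
  rw [maxElems_starOp hlt'tr h1']
  classical
  have hind : ∀ (A : Set P), ind A p = if p ∈ A then 1 else 0 := by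
    intro A; simp [ind, Set.indicator_apply]
  rw [hind, hind, hind, hind]
  by_cases hm1 : p ∈ maxElems lt' J1 <;> by_cases hm2 : p ∈ maxElems lt' J2
  · -- both maximal
    have hu : p ∈ maxElems lt' (J1 ∪ J2) := by
      refine ⟨Or.inl hm1.1, ?_⟩
      rintro q (hq | hq) h
      · exact hm1.2 q hq h
      · exact hm2.2 q hq h
    have hg : p ∈ (J1 ∩ J2) ∩ (maxElems lt' J1 ∪ maxElems lt' J2) :=
      ⟨⟨hm1.1, hm2.1⟩, Or.inl hm1⟩
    simp [hm1, hm2, hu, hg]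
  · by_cases hpJ2 : p ∈ J2
    · -- p ∈ M1, p ∈ J2 \ M2
      obtain ⟨q, hqJ2, hq⟩ : ∃ q ∈ J2, lt' p q := by
        by_contra h; push_neg at h; exact hm2 ⟨hpJ2, h⟩
      have hu : p ∉ maxElems lt' (J1 ∪ J2) := fun hu => hu.2 q (Or.inr hqJ2) hq
      have hg : p ∈ (J1 ∩ J2) ∩ (maxElems lt' J1 ∪ maxElems lt' J2) :=
        ⟨⟨hm1.1, hpJ2⟩, Or.inl hm1⟩
      simp [hm1, hm2, hu, hg]
    · -- p ∈ M1, p ∉ J2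
      have hu : p ∈ maxElems lt' (J1 ∪ J2) := by
        refine ⟨Or.inl hm1.1, ?_⟩
        rintro q (hq | hq) h
        · exact hm1.2 q hq h
        · exact hpJ2 (h2 (hweak _ _ h) hq)
      have hg : p ∉ (J1 ∩ J2) ∩ (maxElems lt' J1 ∪ maxElems lt' J2) :=
        fun hg => hpJ2 hg.1.2
      simp [hm1, hm2, hu, hg]
  · by_cases hpJ1 : p ∈ J1
    · obtain ⟨q, hqJ1, hq⟩ : ∃ q ∈ J1, lt' p q := by
        by_contra h; push_neg at h; exact hm1 ⟨hpJ1, h⟩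
      have hu : p ∉ maxElems lt' (J1 ∪ J2) := fun hu => hu.2 q (Or.inl hqJ1) hq
      have hg : p ∈ (J1 ∩ J2) ∩ (maxElems lt' J1 ∪ maxElems lt' J2) :=
        ⟨⟨hpJ1, hm2.1⟩, Or.inr hm2⟩
      simp [hm1, hm2, hu, hg]
    · have hu : p ∈ maxElems lt' (J1 ∪ J2) := by
        refine ⟨Or.inr hm2.1, ?_⟩
        rintro q (hq | hq) h
        · exact hpJ1 (h1 (hweak _ _ h) hq)
        · exact hm2.2 q hq h
      have hg : p ∉ (J1 ∩ J2) ∩ (maxElems lt' J1 ∪ maxElems lt' J2) :=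
        fun hg => hpJ1 hg.1.1
      simp [hm1, hm2, hu, hg]
  · -- neither maximal
    have hu : p ∉ maxElems lt' (J1 ∪ J2) := by
      rintro ⟨hp | hp, hmax⟩
      · exact hm1 ⟨hp, fun q hq => hmax q (Or.inl hq)⟩
      · exact hm2 ⟨hp, fun q hq => hmax q (Or.inr hq)⟩
    have hg : p ∉ (J1 ∩ J2) ∩ (maxElems lt' J1 ∪ maxElems lt' J2) := by
      rintro ⟨_, hm | hm⟩
      · exact hm1 hm
      · exact hm2 hm
    simp [hm1, hm2, hu, hg]

/-- On `Pstar`, the vertex `v(J)` has coordinates given by the trace `J ∩ Pstar`. -/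
lemma vert_coord {Pstar J : Set P} (hiii : ∀ p ∈ Pstar, ∀ q : P, ¬ lt' p q) {p : P}
    (hp : p ∈ Pstar) :
    ind (maxElems lt' J) p = (J ∩ Pstar).indicator (1 : P → ℝ) p := by
  classical
  have h : p ∈ maxElems lt' J ↔ p ∈ J ∩ Pstar := by
    constructor
    · intro h; exact ⟨h.1, hp⟩
    · intro h; exact ⟨h.1, fun q _ => hiii p hp q⟩
  simp [ind, Set.indicator_apply, h]

lemma union_lowerIdeal {J1 J2 : Set P} (h1 : IsLowerIdeal lt J1) (h2 : IsLowerIdeal lt J2) :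
    IsLowerIdeal lt (J1 ∪ J2) := by
  rintro p q h (hq | hq)
  · exact Or.inl (h1 h hq)
  · exact Or.inr (h2 h hq)

lemma empty_lowerIdeal : IsLowerIdeal lt (∅ : Set P) := fun _ _ _ h => h

lemma genIdeal_lowerIdeal (hlttr : ∀ a b c, lt a b → lt b c → lt a c) (A : Set P) :
    IsLowerIdeal lt (genIdeal lt A) := by
  rintro p q h ⟨a, ha, hqa⟩
  have hpa : lt p a := by
    rcases hqa with rfl | hqa
    · exact h
    · exact hlttr _ _ _ h hqa
  exact ⟨a, ha, Or.inr hpa⟩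

lemma starOp_subset_inter (hweak : ∀ p q, lt' p q → lt p q)
    {J1 J2 : Set P} (h1 : IsLowerIdeal lt J1) (h2 : IsLowerIdeal lt J2) :
    starOp lt' J1 J2 ⊆ J1 ∩ J2 := by
  rintro p ⟨g, hg, hp⟩
  rcases hp with rfl | hp
  · exact hg.1
  · exact ⟨h1 (hweak _ _ hp) hg.1.1, h2 (hweak _ _ hp) hg.1.2⟩

end Basic

section SumSets
variable {ι E : Type*} [AddCommMonoid E] [DecidableEq ι]

lemma mem_finsetSum (s : Finset ι) (f : ι → Set E) (x : E) :
    x ∈ ∑ i ∈ s, f i ↔ ∃ g : ι → E, (∀ i ∈ s, g i ∈ f i) ∧ x = ∑ i ∈ s, g i := by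
  classical
  induction s using Finset.induction_on generalizing x with
  | empty => simp [Set.mem_zero, eq_comm]
  | insert a s ha ih =>
    rw [Finset.sum_insert ha, Set.mem_add]
    constructor
    · rintro ⟨y, hy, z, hz, rfl⟩
      obtain ⟨g, hg, rfl⟩ := (ih z).1 hz
      refine ⟨fun i => if i = a then y else g i, ?_, ?_⟩
      · intro i hi
        rcases Finset.mem_insert.1 hi with rfl | hi
        · simp [hy]
        · have : i ≠ a := fun h => ha (h ▸ hi)
          simp [this, hg i hi]
      · rw [Finset.sum_insert ha, if_pos rfl]
        congr 1
        exact Finset.sum_congr rfl fun i hi => by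
          have : i ≠ a := fun h => ha (h ▸ hi)
          simp [this]
    · rintro ⟨g, hg, rfl⟩
      rw [Finset.sum_insert ha]
      exact ⟨g a, hg a (Finset.mem_insert_self a s), ∑ i ∈ s, g i,
        (ih _).2 ⟨g, fun i hi => hg i (Finset.mem_insert_of_mem hi), rfl⟩, rfl⟩

end SumSets

section Unique
variable {P : Type*}

private lemma indvalue (K : Set P) (p : P) [Decidable (p ∈ K)] :
    K.indicator (1 : P → ℝ) p = if p ∈ K then 1 else 0 := by
  simp [Set.indicator_apply]

lemma chain_decomp_unique (Pstar : Set P) :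
    ∀ (n : ℕ) (𝒞 𝒟 : Finset (Set P)) (c d : Set P → ℝ),
      𝒞.card + 𝒟.card ≤ n →
      (∀ K ∈ 𝒞, K ⊆ Pstar) → (∀ K ∈ 𝒞, K.Nonempty) → (∀ K ∈ 𝒞, 0 < c K) →
      (∀ K1 ∈ 𝒞, ∀ K2 ∈ 𝒞, K1 ⊆ K2 ∨ K2 ⊆ K1) →
      (∀ K ∈ 𝒟, K ⊆ Pstar) → (∀ K ∈ 𝒟, K.Nonempty) → (∀ K ∈ 𝒟, 0 < d K) →
      (∀ K1 ∈ 𝒟, ∀ K2 ∈ 𝒟, K1 ⊆ K2 ∨ K2 ⊆ K1) →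
      (∀ p ∈ Pstar, ∑ K ∈ 𝒞, c K * K.indicator 1 p = ∑ K ∈ 𝒟, d K * K.indicator 1 p) →
      𝒞 = 𝒟 ∧ ∀ K ∈ 𝒞, c K = d K := by
  classical
  intro n
  induction n with
  | zero =>
    intro 𝒞 𝒟 c d hcard _ _ _ _ _ _ _ _ _
    have h1 : 𝒞 = ∅ := Finset.card_eq_zero.1 (by omega)
    have h2 : 𝒟 = ∅ := Finset.card_eq_zero.1 (by omega)
    exact ⟨h1.trans h2.symm, by simp [h1]⟩
  | succ n ih =>
    intro 𝒞 𝒟 c d hcard hCsub hCne hCpos hCch hDsub hDne hDpos hDch heq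
    have hindnn : ∀ (K : Set P) (p : P), (0:ℝ) ≤ K.indicator 1 p := by
      intro K p; rw [indvalue]; split <;> norm_num
    have hindle : ∀ (K : Set P) (p : P), K.indicator (1 : P → ℝ) p ≤ 1 := by
      intro K p; rw [indvalue]; split <;> norm_num
    by_cases hCe : 𝒞 = ∅
    · subst hCe
      have hDe : 𝒟 = ∅ := by
        by_contra hne
        obtain ⟨D, hD⟩ := Finset.nonempty_iff_ne_empty.2 hne
        obtain ⟨p, hp⟩ := hDne D hD
        have hpP : p ∈ Pstar := hDsub D hD hp
        have h0 := heq p hpP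
        simp only [Finset.sum_empty] at h0
        have hpos : 0 < ∑ K ∈ 𝒟, d K * K.indicator 1 p := by
          refine Finset.sum_pos' (fun K hK => mul_nonneg (le_of_lt (hDpos K hK)) (hindnn K p)) ?_
          refine ⟨D, hD, ?_⟩
          rw [indvalue, if_pos hp, mul_one]
          exact hDpos D hD
        linarith
      exact ⟨hDe.symm ▸ rfl, by simp⟩
    by_cases hDe : 𝒟 = ∅
    · subst hDe
      exfalso
      obtain ⟨C, hC⟩ := Finset.nonempty_iff_ne_empty.2 hCe
      obtain ⟨p, hp⟩ := hCne C hC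
      have hpP : p ∈ Pstar := hCsub C hC hp
      have h0 := heq p hpP
      simp only [Finset.sum_empty] at h0
      have hpos : 0 < ∑ K ∈ 𝒞, c K * K.indicator 1 p := by
        refine Finset.sum_pos' (fun K hK => mul_nonneg (le_of_lt (hCpos K hK)) (hindnn K p)) ?_
        refine ⟨C, hC, ?_⟩
        rw [indvalue, if_pos hp, mul_one]
        exact hCpos C hC
      linarith
    -- both nonempty
    obtain ⟨C0, hC0, hC0min⟩ := Finset.exists_minimal (Finset.nonempty_iff_ne_empty.2 hCe)
    obtain ⟨D0, hD0, hD0min⟩ := Finset.exists_minimal (Finset.nonempty_iff_ne_empty.2 hDe)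
    have hC0le : ∀ K ∈ 𝒞, C0 ⊆ K := by
      intro K hK
      rcases hCch C0 hC0 K hK with h | h
      · exact h
      · have := hC0min hK
        exact this h
    have hD0le : ∀ K ∈ 𝒟, D0 ⊆ K := by
      intro K hK
      rcases hDch D0 hD0 K hK with h | h
      · exact h
      · have := hD0min hK
        exact this h
    have hvalC : ∀ p ∈ C0, ∑ K ∈ 𝒞, c K * K.indicator 1 p = ∑ K ∈ 𝒞, c K := by
      intro p hp
      refine Finset.sum_congr rfl fun K hK => ?_
      rw [indvalue, if_pos (hC0le K hK hp), mul_one]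
    have hvalD : ∀ p ∈ D0, ∑ K ∈ 𝒟, d K * K.indicator 1 p = ∑ K ∈ 𝒟, d K := by
      intro p hp
      refine Finset.sum_congr rfl fun K hK => ?_
      rw [indvalue, if_pos (hD0le K hK hp), mul_one]
    have hbndC : ∀ p, ∑ K ∈ 𝒞, c K * K.indicator 1 p ≤ ∑ K ∈ 𝒞, c K :=
      fun p => Finset.sum_le_sum fun K hK => by
        calc c K * K.indicator 1 p ≤ c K * 1 :=
              mul_le_mul_of_nonneg_left (hindle K p) (le_of_lt (hCpos K hK))
          _ = c K := mul_one _
    have hbndD : ∀ p, ∑ K ∈ 𝒟, d K * K.indicator 1 p ≤ ∑ K ∈ 𝒟, d K :=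
      fun p => Finset.sum_le_sum fun K hK => by
        calc d K * K.indicator 1 p ≤ d K * 1 :=
              mul_le_mul_of_nonneg_left (hindle K p) (le_of_lt (hDpos K hK))
          _ = d K := mul_one _
    obtain ⟨p0, hp0⟩ := hCne C0 hC0
    obtain ⟨q0, hq0⟩ := hDne D0 hD0
    have hp0P : p0 ∈ Pstar := hCsub C0 hC0 hp0
    have hq0P : q0 ∈ Pstar := hDsub D0 hD0 hq0
    have hTcd : ∑ K ∈ 𝒞, c K = ∑ K ∈ 𝒟, d K := by
      have h1 : ∑ K ∈ 𝒞, c K ≤ ∑ K ∈ 𝒟, d K := by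
        rw [← hvalC p0 hp0, heq p0 hp0P]; exact hbndD p0
      have h2 : ∑ K ∈ 𝒟, d K ≤ ∑ K ∈ 𝒞, c K := by
        rw [← hvalD q0 hq0, ← heq q0 hq0P]; exact hbndC q0
      linarith
    have hC0D0 : C0 = D0 := by
      have hsub1 : C0 ⊆ D0 := by
        intro p hp
        by_contra hpD0
        have hlt : ∑ K ∈ 𝒟, d K * K.indicator 1 p < ∑ K ∈ 𝒟, d K := by
          refine Finset.sum_lt_sum (fun K hK => ?_) ⟨D0, hD0, ?_⟩
          · calc d K * K.indicator 1 p ≤ d K * 1 :=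
                mul_le_mul_of_nonneg_left (hindle K p) (le_of_lt (hDpos K hK))
              _ = d K := mul_one _
          · rw [indvalue, if_neg hpD0, mul_zero]
            exact hDpos D0 hD0
        have := heq p (hCsub C0 hC0 hp)
        rw [hvalC p hp, hTcd] at this
        linarith
      have hsub2 : D0 ⊆ C0 := by
        intro p hp
        by_contra hpC0
        have hlt : ∑ K ∈ 𝒞, c K * K.indicator 1 p < ∑ K ∈ 𝒞, c K := by
          refine Finset.sum_lt_sum (fun K hK => ?_) ⟨C0, hC0, ?_⟩
          · calc c K * K.indicator 1 p ≤ c K * 1 :=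
                mul_le_mul_of_nonneg_left (hindle K p) (le_of_lt (hCpos K hK))
              _ = c K := mul_one _
          · rw [indvalue, if_neg hpC0, mul_zero]
            exact hCpos C0 hC0
        have := heq p (hDsub D0 hD0 hp)
        rw [hvalD p hp, ← hTcd] at this
        linarith
      exact Set.Subset.antisymm hsub1 hsub2
    -- split the equation
    have hsplitC : ∀ p : P, ∑ K ∈ 𝒞.erase C0, c K * K.indicator 1 p
        = (∑ K ∈ 𝒞, c K * K.indicator 1 p) - c C0 * C0.indicator 1 p := by
      intro p
      rw [← Finset.add_sum_erase 𝒞 _ hC0]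
      ring
    have hsplitD : ∀ p : P, ∑ K ∈ 𝒟.erase D0, d K * K.indicator 1 p
        = (∑ K ∈ 𝒟, d K * K.indicator 1 p) - d D0 * D0.indicator 1 p := by
      intro p
      rw [← Finset.add_sum_erase 𝒟 _ hD0]
      ring
    rcases lt_trichotomy (c C0) (d D0) with hlt | heqv | hgt
    · -- impossible
      exfalso
      have hres := ih (𝒞.erase C0) 𝒟 c (Function.update d D0 (d D0 - c C0))
        (by have := Finset.card_erase_of_mem hC0
            have : 0 < 𝒞.card := Finset.card_pos.2 ⟨C0, hC0⟩
            omega)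
        (fun K hK => hCsub K (Finset.mem_of_mem_erase hK))
        (fun K hK => hCne K (Finset.mem_of_mem_erase hK))
        (fun K hK => hCpos K (Finset.mem_of_mem_erase hK))
        (fun K1 h1 K2 h2 => hCch K1 (Finset.mem_of_mem_erase h1) K2 (Finset.mem_of_mem_erase h2))
        hDsub hDne
        (fun K hK => by
          by_cases h : K = D0
          · subst h; rw [Function.update_self]; linarith
          · rw [Function.update_of_ne h]; exact hDpos K hK)
        hDch
        (fun p hp => by
          have hupd : ∑ K ∈ 𝒟, Function.update d D0 (d D0 - c C0) K * K.indicator 1 p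
              = (∑ K ∈ 𝒟, d K * K.indicator 1 p) - c C0 * D0.indicator 1 p := by
            rw [← Finset.add_sum_erase 𝒟 _ hD0, ← Finset.add_sum_erase 𝒟
              (fun K => d K * K.indicator 1 p) hD0, Function.update_self]
            have : ∑ K ∈ 𝒟.erase D0, Function.update d D0 (d D0 - c C0) K * K.indicator 1 p
                = ∑ K ∈ 𝒟.erase D0, d K * K.indicator 1 p :=
              Finset.sum_congr rfl fun K hK => by
                rw [Function.update_of_ne (Finset.ne_of_mem_erase hK)]
            rw [this]; ring
          rw [hupd, hsplitC p, heq p hp, hC0D0])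
      have : C0 ∈ 𝒞.erase C0 := by
        rw [hres.1]; exact hC0D0.symm ▸ hD0
      exact Finset.notMem_erase C0 𝒞 this
    · -- equal case
      have hres := ih (𝒞.erase C0) (𝒟.erase D0) c d
        (by have h1 := Finset.card_erase_of_mem hC0
            have h2 := Finset.card_erase_of_mem hD0
            have : 0 < 𝒞.card := Finset.card_pos.2 ⟨C0, hC0⟩
            omega)
        (fun K hK => hCsub K (Finset.mem_of_mem_erase hK))
        (fun K hK => hCne K (Finset.mem_of_mem_erase hK))
        (fun K hK => hCpos K (Finset.mem_of_mem_erase hK))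
        (fun K1 h1 K2 h2 => hCch K1 (Finset.mem_of_mem_erase h1) K2 (Finset.mem_of_mem_erase h2))
        (fun K hK => hDsub K (Finset.mem_of_mem_erase hK))
        (fun K hK => hDne K (Finset.mem_of_mem_erase hK))
        (fun K hK => hDpos K (Finset.mem_of_mem_erase hK))
        (fun K1 h1 K2 h2 => hDch K1 (Finset.mem_of_mem_erase h1) K2 (Finset.mem_of_mem_erase h2))
        (fun p hp => by
          rw [hsplitC p, hsplitD p, heq p hp, heqv, hC0D0])
      constructor
      · rw [← Finset.insert_erase hC0, ← Finset.insert_erase hD0, hres.1, hC0D0]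
      · intro K hK
        by_cases h : K = C0
        · subst h; rw [heqv, hC0D0]
        · exact hres.2 K (Finset.mem_erase.2 ⟨h, hK⟩)
    · -- impossible (symmetric)
      exfalso
      have hres := ih 𝒞 (𝒟.erase D0) (Function.update c C0 (c C0 - d D0)) d
        (by have := Finset.card_erase_of_mem hD0
            have : 0 < 𝒟.card := Finset.card_pos.2 ⟨D0, hD0⟩
            omega)
        hCsub hCne
        (fun K hK => by
          by_cases h : K = C0
          · subst h; rw [Function.update_self]; linarith
          · rw [Function.update_of_ne h]; exact hCpos K hK)
        hCch
        (fun K hK => hDsub K (Finset.mem_of_mem_erase hK))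
        (fun K hK => hDne K (Finset.mem_of_mem_erase hK))
        (fun K hK => hDpos K (Finset.mem_of_mem_erase hK))
        (fun K1 h1 K2 h2 => hDch K1 (Finset.mem_of_mem_erase h1) K2 (Finset.mem_of_mem_erase h2))
        (fun p hp => by
          have hupd : ∑ K ∈ 𝒞, Function.update c C0 (c C0 - d D0) K * K.indicator 1 p
              = (∑ K ∈ 𝒞, c K * K.indicator 1 p) - d D0 * C0.indicator 1 p := by
            rw [← Finset.add_sum_erase 𝒞 _ hC0, ← Finset.add_sum_erase 𝒞
              (fun K => c K * K.indicator 1 p) hC0, Function.update_self]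
            have : ∑ K ∈ 𝒞.erase C0, Function.update c C0 (c C0 - d D0) K * K.indicator 1 p
                = ∑ K ∈ 𝒞.erase C0, c K * K.indicator 1 p :=
              Finset.sum_congr rfl fun K hK => by
                rw [Function.update_of_ne (Finset.ne_of_mem_erase hK)]
            rw [this]; ring
          rw [hupd, hsplitD p, heq p hp, hC0D0])
      have h1 : C0 ∈ 𝒟.erase D0 := by rw [← hres.1]; exact hC0
      have : D0 ∈ 𝒟.erase D0 := hC0D0 ▸ h1
      exact Finset.notMem_erase D0 𝒟 this

end Unique

section Arith

/-- Key numeric inequality for the straightening potential. -/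
lemma phi_ineq {n a b u s : ℕ} (ha : a ≤ n) (hb : b ≤ n) (hua : a < u) (hub : b < u)
    (hsum : u + s ≤ a + b) :
    ((2 * (n:ℝ)^2 + 1) * u - (u:ℝ)^2) + ((2 * (n:ℝ)^2 + 1) * s - (s:ℝ)^2)
      < ((2 * (n:ℝ)^2 + 1) * a - (a:ℝ)^2) + ((2 * (n:ℝ)^2 + 1) * b - (b:ℝ)^2) := by
  have hA : (a:ℝ) ≤ n := by exact_mod_cast ha
  have hB : (b:ℝ) ≤ n := by exact_mod_cast hb
  have hUA : (a:ℝ) < u := by exact_mod_cast hua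
  have hUB : (b:ℝ) < u := by exact_mod_cast hub
  have hsnn : (0:ℝ) ≤ s := Nat.cast_nonneg s
  have hann : (0:ℝ) ≤ a := Nat.cast_nonneg a
  have hbnn : (0:ℝ) ≤ b := Nat.cast_nonneg b
  rcases eq_or_lt_of_le hsum with heq | hlt
  · have hUS : (u:ℝ) + s = a + b := by exact_mod_cast heq
    nlinarith [mul_pos (sub_pos.2 hUA) (sub_pos.2 hUB)]
  · have hUS : (u:ℝ) + s + 1 ≤ a + b := by exact_mod_cast hlt
    nlinarith [sq_nonneg ((u:ℝ) - s), sq_nonneg ((u:ℝ) + s),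
      mul_le_mul hA hA hann (Nat.cast_nonneg n), mul_le_mul hB hB hbnn (Nat.cast_nonneg n),
      sq_nonneg ((a:ℝ) - b)]

end Arith

section Struct
variable {P : Type*} {lt lt' : P → P → Prop} {Pstar : Set P}

lemma trace_mem_idealsOn {J : Set P} (hJ : IsLowerIdeal lt J) :
    J ∩ Pstar ∈ idealsOn lt Pstar :=
  ⟨Set.inter_subset_right, fun p q hp _ h hqK => ⟨hJ h hqK.1, hp⟩⟩

lemma genIdeal_trace {K : Set P} (hK : K ∈ idealsOn lt Pstar) :
    genIdeal lt K ∩ Pstar = K := by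
  ext p
  constructor
  · rintro ⟨⟨q, hq, hpq⟩, hpP⟩
    rcases hpq with rfl | hpq
    · exact hq
    · exact hK.2 p q hpP (hK.1 hq) hpq hq
  · intro hp
    exact ⟨⟨p, hp, Or.inl rfl⟩, hK.1 hp⟩

lemma RPPfund_nonempty (hlttr : ∀ a b c, lt a b → lt b c → lt a c) {K : Set P}
    (hK : K ∈ idealsOn lt Pstar) : (RPPfund lt lt' Pstar K).Nonempty :=
  ⟨ind (maxElems lt' (genIdeal lt K)), subset_convexHull ℝ _
    ⟨genIdeal lt K, genIdeal_lowerIdeal hlttr K, genIdeal_trace hK, rfl⟩⟩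

lemma RPP_nonempty : (RPP lt lt').Nonempty :=
  ⟨ind (maxElems lt' (∅ : Set P)), subset_convexHull ℝ _ ⟨∅, empty_lowerIdeal, rfl⟩⟩

lemma trace_empty_imp_empty [Fintype P]
    (hltirr : ∀ p, ¬ lt p p) (hlttr : ∀ a b c, lt a b → lt b c → lt a c)
    (hmin : ∀ p : P, (∀ q, ¬ lt q p) → p ∈ Pstar)
    {J : Set P} (hJ : IsLowerIdeal lt J) (h : J ∩ Pstar = ∅) : J = ∅ := by
  by_contra hne
  obtain ⟨p0, hp0⟩ := Set.nonempty_iff_ne_empty.2 hne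
  haveI : IsTrans P lt := ⟨fun a b c => hlttr a b c⟩
  haveI : IsIrrefl P lt := ⟨hltirr⟩
  have hwf : WellFounded lt := Finite.wellFounded_of_trans_of_irrefl lt
  obtain ⟨q, hqJ, hqmin⟩ := hwf.has_min J ⟨p0, hp0⟩
  have hqminP : ∀ r, ¬ lt r q := fun r hr => hqmin r (hJ hr hqJ) hr
  have : q ∈ J ∩ Pstar := ⟨hqJ, hmin q hqminP⟩
  rw [h] at this
  exact this

/-- The affine subspace where coordinates on `Q` are prescribed is convex. -/
lemma convex_eqOn (Q : Set P) (f : P → ℝ) :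
    Convex ℝ {x : P → ℝ | ∀ p ∈ Q, x p = f p} := by
  intro x hx y hy a b ha hb hab
  intro p hp
  simp only [Pi.add_apply, Pi.smul_apply, smul_eq_mul]
  rw [hx p hp, hy p hp, ← add_mul, hab, one_mul]

end Struct

section Dirs
variable {P : Type*} [Fintype P] {lt lt' : P → P → Prop} {Pstar : Set P}

lemma RPPfund_subset_coord (hiii : ∀ p ∈ Pstar, ∀ q : P, ¬ lt' p q) {K : Set P} :
    RPPfund lt lt' Pstar K ⊆ {x : P → ℝ | ∀ p ∈ Pstar, x p = K.indicator 1 p} := by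
  apply convexHull_min _ (convex_eqOn Pstar _)
  rintro x ⟨J, hJ, hKJ, rfl⟩ p hp
  rw [vert_coord hiii hp, hKJ]

lemma RPPfund_subset_RPP {K : Set P} : RPPfund lt lt' Pstar K ⊆ RPP lt lt' :=
  convexHull_mono (by rintro x ⟨J, hJ, _, hx⟩; exact ⟨J, hJ, hx⟩)

lemma cast_indicator (K : Set P) (p : P) :
    ((K.indicator (1 : P → ℤ) p : ℤ) : ℝ) = K.indicator (1 : P → ℝ) p := by
  classical
  by_cases hp : p ∈ K
  · simp [Set.indicator_of_mem hp]
  · simp [Set.indicator_of_notMem hp]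

lemma easy_dir
    (hiii : ∀ p ∈ Pstar, ∀ q : P, ¬ lt' p q)
    (lam : P → ℤ) (α : Set P → ℕ)
    (hαsum : ∀ p ∈ Pstar, lam p =
      ∑ K ∈ (Set.toFinite (idealsOn lt Pstar)).toFinset, (α K : ℤ) * K.indicator 1 p) :
    RPPmarked lt lt' Pstar α ⊆
      dilate (∑ K ∈ (Set.toFinite (idealsOn lt Pstar)).toFinset, α K) (RPP lt lt') ∩
        {x | ∀ p ∈ Pstar, x p = (lam p : ℝ)} := by
  classical
  set 𝒥s := (Set.toFinite (idealsOn lt Pstar)).toFinset with h𝒥s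
  set S : ℕ := ∑ K ∈ 𝒥s, α K with hS
  intro x hx
  rw [RPPmarked, ← h𝒥s] at hx
  obtain ⟨g, hg, rfl⟩ := (mem_finsetSum 𝒥s _ _).1 hx
  have hzed : ∀ K : Set P, ∃ z, K ∈ 𝒥s →
      z ∈ RPPfund lt lt' Pstar K ∧ ((α K : ℝ)) • z = g K := by
    intro K
    by_cases hK : K ∈ 𝒥s
    · obtain ⟨z, h1, h2⟩ := hg K hK
      exact ⟨z, fun _ => ⟨h1, h2⟩⟩
    · exact ⟨0, fun h => absurd h hK⟩
  choose z hz using hzed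
  have hzmem : ∀ K ∈ 𝒥s, z K ∈ RPPfund lt lt' Pstar K := fun K hK => (hz K hK).1
  have hzeq : ∀ K ∈ 𝒥s, ((α K : ℝ)) • z K = g K := fun K hK => (hz K hK).2
  constructor
  · -- x ∈ dilate S RPP
    by_cases hS0 : S = 0
    · have hall : ∀ K ∈ 𝒥s, (α K : ℝ) = 0 := by
        intro K hK
        have h0 : ∑ K ∈ 𝒥s, α K = 0 := by rw [← hS]; exact hS0
        have := Finset.sum_eq_zero_iff.1 h0 K hK
        exact_mod_cast this
      have hx0 : ∑ K ∈ 𝒥s, g K = 0 := by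
        refine Finset.sum_eq_zero fun K hK => ?_
        rw [← hzeq K hK, hall K hK, zero_smul]
      rw [hx0]
      obtain ⟨pt, hpt⟩ := RPP_nonempty (P := P) (lt := lt) (lt' := lt')
      exact ⟨pt, hpt, by rw [hS0]; simp⟩
    · have hS0' : (S : ℝ) ≠ 0 := Nat.cast_ne_zero.2 hS0
      have hwRPP : (∑ K ∈ 𝒥s, ((α K : ℝ) / S) • z K) ∈ RPP lt lt' := by
        rw [RPP]
        refine Convex.sum_mem (convex_convexHull ℝ _) ?_ ?_ ?_
        · intro K hK
          positivity
        · rw [← Finset.sum_div]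
          rw [show (∑ K ∈ 𝒥s, ((α K : ℝ))) = (S : ℝ) by rw [hS]; push_cast; ring]
          exact div_self hS0'
        · intro K hK
          exact RPPfund_subset_RPP (hzmem K hK)
      refine ⟨_, hwRPP, ?_⟩
      show (S : ℝ) • (∑ K ∈ 𝒥s, ((α K : ℝ) / S) • z K) = ∑ K ∈ 𝒥s, g K
      rw [Finset.smul_sum]
      refine Finset.sum_congr rfl fun K hK => ?_
      rw [smul_smul, mul_div_cancel₀ _ hS0', hzeq K hK]
  · -- coordinates
    intro p hp
    rw [Finset.sum_apply]
    have hco : ∀ K ∈ 𝒥s, g K p = (α K : ℝ) * K.indicator 1 p := by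
      intro K hK
      rw [← hzeq K hK]
      simp only [Pi.smul_apply, smul_eq_mul]
      rw [RPPfund_subset_coord hiii (hzmem K hK) p hp]
    rw [Finset.sum_congr rfl hco]
    have hcast : ((lam p : ℤ) : ℝ) = ∑ K ∈ 𝒥s, (α K : ℝ) * K.indicator 1 p := by
      rw [hαsum p hp]
      push_cast
      exact Finset.sum_congr rfl fun K _ => by rw [cast_indicator]
    rw [← hcast]

end Dirs


section Hard
variable {P : Type*} [Fintype P] {lt lt' : P → P → Prop} {Pstar : Set P}

/-- Existence of a chain-supported weighted decomposition of any point of `S·R`. -/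
lemma exists_chain_decomp
    (hltirr : ∀ p, ¬ lt p p) (hlttr : ∀ a b c, lt a b → lt b c → lt a c)
    (hlt'tr : ∀ a b c, lt' a b → lt' b c → lt' a c)
    (hweak : ∀ p q, lt' p q → lt p q)
    (hstar : ∀ J1 J2 : Set P, IsLowerIdeal lt J1 → IsLowerIdeal lt J2 →
      IsLowerIdeal lt (starOp lt' J1 J2))
    (S : ℕ) {x : P → ℝ} (hx : x ∈ dilate S (RPP lt lt')) :
    ∃ t : Set P → ℝ, (∀ J, 0 ≤ t J) ∧
      (∀ J ∉ (Set.toFinite {J : Set P | IsLowerIdeal lt J}).toFinset, t J = 0) ∧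
      (∑ J ∈ (Set.toFinite {J : Set P | IsLowerIdeal lt J}).toFinset, t J = (S : ℝ)) ∧
      (∀ p, ∑ J ∈ (Set.toFinite {J : Set P | IsLowerIdeal lt J}).toFinset,
        t J * ind (maxElems lt' J) p = x p) ∧
      (∀ J1 J2 : Set P, t J1 ≠ 0 → t J2 ≠ 0 → J1 ⊆ J2 ∨ J2 ⊆ J1) := by
  classical
  set 𝒥 : Finset (Set P) := (Set.toFinite {J : Set P | IsLowerIdeal lt J}).toFinset with h𝒥
  have hmem𝒥 : ∀ J : Set P, J ∈ 𝒥 ↔ IsLowerIdeal lt J := by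
    intro J; rw [h𝒥, Set.Finite.mem_toFinset]; rfl
  set T : Set (Set P → ℝ) := {t | (∀ J, 0 ≤ t J) ∧ (∀ J ∉ 𝒥, t J = 0) ∧
    (∑ J ∈ 𝒥, t J = (S : ℝ)) ∧ (∀ p, ∑ J ∈ 𝒥, t J * ind (maxElems lt' J) p = x p)} with hT
  -- T is nonempty
  have hTne : T.Nonempty := by
    obtain ⟨y, hy, hxy⟩ := hx
    rw [RPP, convexHull_eq] at hy
    obtain ⟨ι, tf, w, zf, hw0, hw1, hzf, hcm⟩ := hy
    rw [Finset.centerMass_eq_of_sum_1 _ _ hw1] at hcm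
    have hchoice : ∀ i : ι, ∃ J : Set P, i ∈ tf →
        (IsLowerIdeal lt J ∧ zf i = ind (maxElems lt' J)) := by
      intro i
      by_cases hi : i ∈ tf
      · obtain ⟨J, hJ⟩ := hzf i hi
        exact ⟨J, fun _ => hJ⟩
      · exact ⟨∅, fun h => absurd h hi⟩
    choose Jmap hJmap using hchoice
    have hmapsto : ∀ i ∈ tf, Jmap i ∈ 𝒥 := fun i hi => (hmem𝒥 _).2 (hJmap i hi).1
    refine ⟨fun J => if J ∈ 𝒥 then (S : ℝ) * ∑ i ∈ tf.filter (fun i => Jmap i = J), w i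
      else 0, ?_, ?_, ?_, ?_⟩
    · intro J
      beta_reduce
      split_ifs with h
      · exact mul_nonneg (Nat.cast_nonneg S)
          (Finset.sum_nonneg fun i hi => hw0 i (Finset.mem_of_mem_filter i hi))
      · exact le_refl _
    · intro J hJ
      beta_reduce
      rw [if_neg hJ]
    · beta_reduce
      rw [Finset.sum_congr rfl fun J hJ => if_pos hJ, ← Finset.mul_sum,
        Finset.sum_fiberwise_of_maps_to hmapsto w, hw1, mul_one]
    · intro p
      beta_reduce
      rw [Finset.sum_congr rfl fun J hJ => by rw [if_pos hJ]]
      have hinner : ∀ J ∈ 𝒥, ((S:ℝ) * ∑ i ∈ tf.filter (fun i => Jmap i = J), w i)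
          * ind (maxElems lt' J) p
          = (S:ℝ) * ∑ i ∈ tf.filter (fun i => Jmap i = J), w i * zf i p := by
        intro J hJ
        rw [mul_assoc, Finset.sum_mul]
        congr 1
        refine Finset.sum_congr rfl fun i hi => ?_
        obtain ⟨hitf, hiJ⟩ := Finset.mem_filter.1 hi
        rw [← hiJ, ← (hJmap i hitf).2]
      rw [Finset.sum_congr rfl hinner, ← Finset.mul_sum,
        Finset.sum_fiberwise_of_maps_to hmapsto (fun i => w i * zf i p)]
      have : ∑ i ∈ tf, w i * zf i p = y p := by
        rw [← hcm, Finset.sum_apply]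
        exact Finset.sum_congr rfl fun i _ => by simp
      rw [this]
      have := congrFun hxy p
      simpa using this
  -- T is compact
  have hTsub : T ⊆ Set.pi Set.univ (fun _ : Set P => Set.Icc (0:ℝ) S) := by
    intro t ht J _
    refine ⟨ht.1 J, ?_⟩
    by_cases hJ : J ∈ 𝒥
    · rw [← ht.2.2.1]
      exact Finset.single_le_sum (fun J _ => ht.1 J) hJ
    · rw [ht.2.1 J hJ]
      exact Nat.cast_nonneg S
  have hTclosed : IsClosed T := by
    have hA : IsClosed {t : Set P → ℝ | ∀ J, 0 ≤ t J} := by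
      rw [Set.setOf_forall]
      exact isClosed_iInter fun J => isClosed_le continuous_const (continuous_apply J)
    have hB : IsClosed {t : Set P → ℝ | ∀ J ∉ 𝒥, t J = 0} := by
      rw [Set.setOf_forall]
      refine isClosed_iInter fun J => ?_
      by_cases hJ : J ∈ 𝒥
      · simp only [hJ, not_true_eq_false, false_implies, Set.setOf_true]
        exact isClosed_univ
      · simp only [hJ, not_false_eq_true, true_implies]
        exact isClosed_eq (continuous_apply J) continuous_const
    have hC : IsClosed {t : Set P → ℝ | ∑ J ∈ 𝒥, t J = (S : ℝ)} :=
      isClosed_eq (continuous_finset_sum _ fun J _ => continuous_apply J) continuous_const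
    have hD : IsClosed {t : Set P → ℝ | ∀ p, ∑ J ∈ 𝒥, t J * ind (maxElems lt' J) p = x p} := by
      rw [Set.setOf_forall]
      exact isClosed_iInter fun p => isClosed_eq
        (continuous_finset_sum _ fun J _ => (continuous_apply J).mul continuous_const)
        continuous_const
    have : T = {t : Set P → ℝ | ∀ J, 0 ≤ t J} ∩ ({t | ∀ J ∉ 𝒥, t J = 0} ∩
        ({t | ∑ J ∈ 𝒥, t J = (S : ℝ)} ∩
          {t | ∀ p, ∑ J ∈ 𝒥, t J * ind (maxElems lt' J) p = x p})) := rfl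
    rw [this]
    exact hA.inter (hB.inter (hC.inter hD))
  have hTcpt : IsCompact T :=
    IsCompact.of_isClosed_subset (isCompact_univ_pi fun _ => isCompact_Icc) hTclosed hTsub
  -- minimize the potential
  set n : ℕ := Fintype.card P with hn
  set φ : Set P → ℝ := fun J => (2 * (n:ℝ)^2 + 1) * J.ncard - (J.ncard : ℝ)^2 with hφ
  set Φ : (Set P → ℝ) → ℝ := fun t => ∑ J ∈ 𝒥, t J * φ J with hΦ
  have hΦcont : Continuous Φ :=
    continuous_finset_sum _ fun J _ => (continuous_apply J).mul continuous_const
  obtain ⟨t0, ht0T, ht0min⟩ := hTcpt.exists_isMinOn hTne hΦcont.continuousOn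
  obtain ⟨ht0nn, ht0supp, ht0sum, ht0pt⟩ := ht0T
  refine ⟨t0, ht0nn, ht0supp, ht0sum, ht0pt, ?_⟩
  -- support is a chain
  intro J1 J2 h1 h2
  by_contra hcon
  push_neg at hcon
  obtain ⟨hn12, hn21⟩ := hcon
  have hJ1m : J1 ∈ 𝒥 := by
    by_contra h; exact h1 (ht0supp J1 h)
  have hJ2m : J2 ∈ 𝒥 := by
    by_contra h; exact h2 (ht0supp J2 h)
  have h1l : IsLowerIdeal lt J1 := (hmem𝒥 J1).1 hJ1m
  have h2l : IsLowerIdeal lt J2 := (hmem𝒥 J2).1 hJ2m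
  have hm1 : 0 < t0 J1 := lt_of_le_of_ne (ht0nn J1) (Ne.symm h1)
  have hm2 : 0 < t0 J2 := lt_of_le_of_ne (ht0nn J2) (Ne.symm h2)
  set m : ℝ := min (t0 J1) (t0 J2) with hm
  have hmpos : 0 < m := lt_min hm1 hm2
  set Ju : Set P := J1 ∪ J2 with hJu
  set Js : Set P := starOp lt' J1 J2 with hJs
  have hJum : Ju ∈ 𝒥 := (hmem𝒥 Ju).2 (union_lowerIdeal h1l h2l)
  have hJsm : Js ∈ 𝒥 := (hmem𝒥 Js).2 (hstar J1 J2 h1l h2l)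
  have hsint : Js ⊆ J1 ∩ J2 := starOp_subset_inter hweak h1l h2l
  have hd12 : J1 ≠ J2 := fun h => hn12 (h ▸ subset_rfl)
  have hdu1 : Ju ≠ J1 := fun h => hn21 (h ▸ Set.subset_union_right)
  have hdu2 : Ju ≠ J2 := fun h => hn12 (h ▸ Set.subset_union_left)
  have hds1 : Js ≠ J1 := fun h => hn12 ((h ▸ hsint).trans Set.inter_subset_right)
  have hds2 : Js ≠ J2 := fun h => hn21 ((h ▸ hsint).trans Set.inter_subset_left)
  have hdsu : Js ≠ Ju := by
    intro h
    refine hn12 (fun p hp => ?_)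
    have hpJs : p ∈ Js := by rw [h]; exact Set.subset_union_left hp
    exact (hsint hpJs).2
  set t1 : Set P → ℝ := fun J => t0 J + m *
    (((if J = Ju then 1 else 0) + (if J = Js then 1 else 0))
      - ((if J = J1 then 1 else 0) + (if J = J2 then 1 else 0))) with ht1
  have hkey : ∀ f : Set P → ℝ, ∑ J ∈ 𝒥, t1 J * f J
      = (∑ J ∈ 𝒥, t0 J * f J) + m * (f Ju + f Js - (f J1 + f J2)) := by
    intro f
    have hstep : ∀ J ∈ 𝒥, t1 J * f J = t0 J * f J
        + m * (((if J = Ju then f J else 0) + (if J = Js then f J else 0))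
          - ((if J = J1 then f J else 0) + (if J = J2 then f J else 0))) := by
      intro J _
      rw [ht1]
      simp only [ite_mul, one_mul, zero_mul, mul_ite, mul_zero]
      split_ifs <;> ring
    rw [Finset.sum_congr rfl hstep, Finset.sum_add_distrib, ← Finset.mul_sum,
      Finset.sum_sub_distrib, Finset.sum_add_distrib, Finset.sum_add_distrib,
      Finset.sum_ite_eq' 𝒥 Ju f, Finset.sum_ite_eq' 𝒥 Js f, Finset.sum_ite_eq' 𝒥 J1 f,
      Finset.sum_ite_eq' 𝒥 J2 f, if_pos hJum, if_pos hJsm, if_pos hJ1m, if_pos hJ2m]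
  have ht1J1 : t1 J1 = t0 J1 - m := by
    rw [ht1]
    simp only [if_neg (Ne.symm hdu1), if_neg (Ne.symm hds1), if_pos rfl, if_neg hd12, if_true]
    ring
  have ht1J2 : t1 J2 = t0 J2 - m := by
    rw [ht1]
    simp only [if_neg (Ne.symm hdu2), if_neg (Ne.symm hds2), if_neg (Ne.symm hd12), if_pos rfl, if_true]
    ring
  have ht1Ju : t1 Ju = t0 Ju + m := by
    rw [ht1]
    simp only [if_pos rfl, if_neg (Ne.symm hdsu), if_neg hdu1, if_neg hdu2, if_true]
    ring
  have ht1Js : t1 Js = t0 Js + m := by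
    rw [ht1]
    simp only [if_neg hdsu, if_pos rfl, if_neg hds1, if_neg hds2, if_true]
    ring
  have ht1other : ∀ J, J ≠ Ju → J ≠ Js → J ≠ J1 → J ≠ J2 → t1 J = t0 J := by
    intro J hu hs hh1 hh2
    rw [ht1]
    simp only [if_neg hu, if_neg hs, if_neg hh1, if_neg hh2]
    ring
  have ht1T : t1 ∈ T := by
    refine ⟨?_, ?_, ?_, ?_⟩
    · intro J
      by_cases hh1 : J = J1
      · subst hh1; rw [ht1J1]; have := min_le_left (t0 J) (t0 J2); rw [← hm] at this; linarith
      by_cases hh2 : J = J2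
      · subst hh2; rw [ht1J2]; have := min_le_right (t0 J1) (t0 J); rw [← hm] at this; linarith
      by_cases hhu : J = Ju
      · subst hhu; rw [ht1Ju]; have := ht0nn Ju; linarith
      by_cases hhs : J = Js
      · subst hhs; rw [ht1Js]; have := ht0nn Js; linarith
      · rw [ht1other J hhu hhs hh1 hh2]; exact ht0nn J
    · intro J hJ
      have hu : J ≠ Ju := fun h => hJ (h ▸ hJum)
      have hs : J ≠ Js := fun h => hJ (h ▸ hJsm)
      have hh1 : J ≠ J1 := fun h => hJ (h ▸ hJ1m)
      have hh2 : J ≠ J2 := fun h => hJ (h ▸ hJ2m)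
      rw [ht1other J hu hs hh1 hh2]
      exact ht0supp J hJ
    · have := hkey (fun _ => 1)
      simp only [mul_one] at this
      rw [this, ht0sum]
      ring
    · intro p
      have := hkey (fun J => ind (maxElems lt' J) p)
      rw [this, ht0pt p]
      have hid := vertex_identity hlt'tr hweak h1l h2l p
      rw [← hJs, ← hJu] at hid
      have hzero : ind (maxElems lt' Ju) p + ind (maxElems lt' Js) p
          - (ind (maxElems lt' J1) p + ind (maxElems lt' J2) p) = 0 := by linarith
      rw [hzero, mul_zero, add_zero]
  -- the potential strictly decreases : contradiction
  have hΦlt : Φ t1 < Φ t0 := by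
    have harith : φ Ju + φ Js < φ J1 + φ J2 := by
      have hau : J1.ncard < Ju.ncard :=
        Set.ncard_lt_ncard (HasSubset.Subset.ssubset_of_ne Set.subset_union_left
          (Ne.symm hdu1)) (Set.toFinite Ju)
      have hbu : J2.ncard < Ju.ncard :=
        Set.ncard_lt_ncard (HasSubset.Subset.ssubset_of_ne Set.subset_union_right
          (Ne.symm hdu2)) (Set.toFinite Ju)
      have hiu : Ju.ncard + (J1 ∩ J2).ncard = J1.ncard + J2.ncard :=
        Set.ncard_union_add_ncard_inter J1 J2 (Set.toFinite J1) (Set.toFinite J2)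
      have hsle : Js.ncard ≤ (J1 ∩ J2).ncard :=
        Set.ncard_le_ncard hsint (Set.toFinite _)
      have hsum : Ju.ncard + Js.ncard ≤ J1.ncard + J2.ncard := by omega
      have hcardle : ∀ A : Set P, A.ncard ≤ n := by
        intro A
        rw [hn, ← Nat.card_eq_fintype_card, ← Set.ncard_univ]
        exact Set.ncard_le_ncard (Set.subset_univ _) (Set.toFinite _)
      exact phi_ineq (hcardle J1) (hcardle J2) hau hbu hsum
    show (∑ J ∈ 𝒥, t1 J * φ J) < ∑ J ∈ 𝒥, t0 J * φ J
    rw [hkey φ]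
    nlinarith [mul_pos hmpos (by linarith : (0:ℝ) < (φ J1 + φ J2) - (φ Ju + φ Js))]
  exact absurd (isMinOn_iff.1 ht0min t1 ht1T) (not_le.2 hΦlt)

end Hard


lemma hard_dir {P : Type*} [Fintype P] {lt lt' : P → P → Prop} {Pstar : Set P}
    (hltirr : ∀ p, ¬ lt p p) (hlttr : ∀ a b c, lt a b → lt b c → lt a c)
    (hlt'tr : ∀ a b c, lt' a b → lt' b c → lt' a c)
    (hweak : ∀ p q, lt' p q → lt p q)
    (hstar : ∀ J1 J2 : Set P, IsLowerIdeal lt J1 → IsLowerIdeal lt J2 →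
      IsLowerIdeal lt (starOp lt' J1 J2))
    (hiii : ∀ p ∈ Pstar, ∀ q : P, ¬ lt' p q)
    (lam : P → ℤ) (α : Set P → ℕ)
    (hαsupp : ∀ K : Set P, α K ≠ 0 → K ∈ idealsOn lt Pstar ∧ K.Nonempty)
    (hαchain : ∀ K1 K2 : Set P, α K1 ≠ 0 → α K2 ≠ 0 → K1 ⊆ K2 ∨ K2 ⊆ K1)
    (hαsum : ∀ p ∈ Pstar, lam p =
      ∑ K ∈ (Set.toFinite (idealsOn lt Pstar)).toFinset, (α K : ℤ) * K.indicator 1 p) :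
    dilate (∑ K ∈ (Set.toFinite (idealsOn lt Pstar)).toFinset, α K) (RPP lt lt') ∩
        {x | ∀ p ∈ Pstar, x p = (lam p : ℝ)} ⊆ RPPmarked lt lt' Pstar α := by
  classical
  set 𝒥 : Finset (Set P) := (Set.toFinite {J : Set P | IsLowerIdeal lt J}).toFinset with h𝒥
  set 𝒥s : Finset (Set P) := (Set.toFinite (idealsOn lt Pstar)).toFinset with h𝒥s
  set S : ℕ := ∑ K ∈ 𝒥s, α K with hS
  have hmem𝒥 : ∀ J : Set P, J ∈ 𝒥 ↔ IsLowerIdeal lt J := by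
    intro J; rw [h𝒥, Set.Finite.mem_toFinset]; rfl
  have hmem𝒥s : ∀ K : Set P, K ∈ 𝒥s ↔ K ∈ idealsOn lt Pstar := by
    intro K; rw [h𝒥s, Set.Finite.mem_toFinset]
  rintro x ⟨hxd, hxc⟩
  obtain ⟨t0, htnn, htsupp, htsum, htpt, htchain⟩ :=
    exists_chain_decomp hltirr hlttr hlt'tr hweak hstar S hxd
  rw [← h𝒥] at htsupp htsum htpt
  have hmapsto : ∀ J ∈ 𝒥, J ∩ Pstar ∈ 𝒥s :=
    fun J hJ => (hmem𝒥s _).2 (trace_mem_idealsOn ((hmem𝒥 J).1 hJ))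
  set g : Set P → ℝ := fun K => ∑ J ∈ 𝒥.filter (fun J => J ∩ Pstar = K), t0 J with hg
  have hgnn : ∀ K, 0 ≤ g K := fun K => Finset.sum_nonneg fun J _ => htnn J
  have hgsum : ∑ K ∈ 𝒥s, g K = (S : ℝ) := by
    rw [hg, Finset.sum_fiberwise_of_maps_to hmapsto t0, htsum]
  have hgpt : ∀ p ∈ Pstar, ∑ K ∈ 𝒥s, g K * K.indicator 1 p = (lam p : ℝ) := by
    intro p hp
    have hstep : ∀ K ∈ 𝒥s, g K * K.indicator 1 p
        = ∑ J ∈ 𝒥.filter (fun J => J ∩ Pstar = K), t0 J * ind (maxElems lt' J) p := by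
      intro K hK
      rw [hg, Finset.sum_mul]
      refine Finset.sum_congr rfl fun J hJ => ?_
      obtain ⟨hJm, hJK⟩ := Finset.mem_filter.1 hJ
      rw [vert_coord hiii hp, hJK]
    rw [Finset.sum_congr rfl hstep,
      Finset.sum_fiberwise_of_maps_to hmapsto (fun J => t0 J * ind (maxElems lt' J) p),
      htpt p]
    exact hxc p hp
  -- g agrees with α on 𝒥s
  have hwit : ∀ K : Set P, g K ≠ 0 → ∃ J, J ∈ 𝒥 ∧ t0 J ≠ 0 ∧ J ∩ Pstar = K := by
    intro K hgK
    by_contra hcon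
    push_neg at hcon
    refine hgK (Finset.sum_eq_zero fun J hJ => ?_)
    obtain ⟨hJm, hJK⟩ := Finset.mem_filter.1 hJ
    by_contra ht
    exact hcon J hJm ht hJK
  have hαeq : ∀ K ∈ 𝒥s, g K = (α K : ℝ) := by
    set 𝒞 : Finset (Set P) := 𝒥s.filter (fun K => g K ≠ 0 ∧ K ≠ ∅) with h𝒞
    set 𝒟 : Finset (Set P) := 𝒥s.filter (fun K => α K ≠ 0) with h𝒟
    have hCmem : ∀ K, K ∈ 𝒞 ↔ (K ∈ 𝒥s ∧ g K ≠ 0 ∧ K ≠ ∅) := fun K => Finset.mem_filter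
    have hDmem : ∀ K, K ∈ 𝒟 ↔ (K ∈ 𝒥s ∧ α K ≠ 0) := fun K => Finset.mem_filter
    have huniq := chain_decomp_unique Pstar (𝒞.card + 𝒟.card) 𝒞 𝒟 g (fun K => (α K : ℝ))
      le_rfl
      (fun K hK => ((hmem𝒥s K).1 ((hCmem K).1 hK).1).1)
      (fun K hK => Set.nonempty_iff_ne_empty.2 ((hCmem K).1 hK).2.2)
      (fun K hK => lt_of_le_of_ne (hgnn K) (Ne.symm ((hCmem K).1 hK).2.1))
      (fun K1 h1 K2 h2 => by
        obtain ⟨J1, hJ1m, hJ1t, hJ1K⟩ := hwit K1 ((hCmem K1).1 h1).2.1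
        obtain ⟨J2, hJ2m, hJ2t, hJ2K⟩ := hwit K2 ((hCmem K2).1 h2).2.1
        rcases htchain J1 J2 hJ1t hJ2t with h | h
        · exact Or.inl (hJ1K ▸ hJ2K ▸ Set.inter_subset_inter_left Pstar h)
        · exact Or.inr (hJ2K ▸ hJ1K ▸ Set.inter_subset_inter_left Pstar h))
      (fun K hK => (hαsupp K ((hDmem K).1 hK).2).1.1)
      (fun K hK => (hαsupp K ((hDmem K).1 hK).2).2)
      (fun K hK => by
        have := ((hDmem K).1 hK).2
        positivity)
      (fun K1 h1 K2 h2 => hαchain K1 K2 ((hDmem K1).1 h1).2 ((hDmem K2).1 h2).2)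
      (fun p hp => by
        have hC : ∑ K ∈ 𝒞, g K * K.indicator 1 p = ∑ K ∈ 𝒥s, g K * K.indicator 1 p := by
          rw [h𝒞]
          refine Finset.sum_filter_of_ne fun K hK hne => ?_
          constructor
          · intro h0; exact hne (by rw [h0, zero_mul])
          · intro h0
            refine hne ?_
            rw [h0]
            simp
        have hD : ∑ K ∈ 𝒟, (α K : ℝ) * K.indicator 1 p
            = ∑ K ∈ 𝒥s, (α K : ℝ) * K.indicator 1 p := by
          rw [h𝒟]
          refine Finset.sum_filter_of_ne fun K hK hne => ?_
          intro h0; exact hne (by rw [h0, Nat.cast_zero, zero_mul])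
        rw [hC, hD, hgpt p hp, hαsum p hp]
        push_cast
        exact Finset.sum_congr rfl fun K _ => by rw [cast_indicator])
    obtain ⟨hCD, hval⟩ := huniq
    have hne : ∀ K ∈ 𝒥s, K ≠ ∅ → g K = (α K : ℝ) := by
      intro K hK hKne
      by_cases hKC : K ∈ 𝒞
      · exact hval K hKC
      · have hg0 : g K = 0 := by
          by_contra h0
          exact hKC ((hCmem K).2 ⟨hK, h0, hKne⟩)
        have hα0 : α K = 0 := by
          by_contra h0
          have : K ∈ 𝒟 := (hDmem K).2 ⟨hK, h0⟩
          rw [← hCD] at this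
          exact hKC this
        rw [hg0, hα0, Nat.cast_zero]
    intro K hK
    by_cases hKe : K = ∅
    · subst hKe
      have hα0 : α (∅ : Set P) = 0 := by
        by_contra h0
        exact Set.not_nonempty_empty (hαsupp ∅ h0).2
      have hsum2 : ∑ K ∈ 𝒥s, (α K : ℝ) = (S : ℝ) := by
        rw [hS]; push_cast; ring
      have h1 : g ∅ + ∑ K ∈ 𝒥s.erase ∅, g K = (S : ℝ) := by
        rw [Finset.add_sum_erase 𝒥s g hK, hgsum]
      have h2 : (α (∅ : Set P) : ℝ) + ∑ K ∈ 𝒥s.erase ∅, (α K : ℝ) = (S : ℝ) := by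
        have h := Finset.add_sum_erase 𝒥s (fun K => ((α K : ℕ) : ℝ)) hK
        beta_reduce at h
        rw [h, hsum2]
      have h3 : ∑ K ∈ 𝒥s.erase ∅, g K = ∑ K ∈ 𝒥s.erase ∅, (α K : ℝ) :=
        Finset.sum_congr rfl fun K hKm =>
          hne K (Finset.mem_of_mem_erase hKm) (Finset.ne_of_mem_erase hKm)
      linarith
    · exact hne K hK hKe
  -- assemble the Minkowski sum decomposition
  rw [RPPmarked, ← h𝒥s]
  refine (mem_finsetSum 𝒥s _ x).2
    ⟨fun K => ∑ J ∈ 𝒥.filter (fun J => J ∩ Pstar = K), t0 J • ind (maxElems lt' J), ?_, ?_⟩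
  · intro K hK
    beta_reduce
    by_cases hα0 : α K = 0
    · have hg0 : g K = 0 := by rw [hαeq K hK, hα0, Nat.cast_zero]
      have hz : ∀ J ∈ 𝒥.filter (fun J => J ∩ Pstar = K), t0 J = 0 :=
        (Finset.sum_eq_zero_iff_of_nonneg fun J _ => htnn J).1 hg0
      have hzero : ∑ J ∈ 𝒥.filter (fun J => J ∩ Pstar = K), t0 J • ind (maxElems lt' J)
          = (0 : P → ℝ) :=
        Finset.sum_eq_zero fun J hJ => by rw [hz J hJ, zero_smul]
      obtain ⟨pt, hpt⟩ := RPPfund_nonempty (lt' := lt') hlttr ((hmem𝒥s K).1 hK)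
      refine ⟨pt, hpt, ?_⟩
      show ((α K : ℕ) : ℝ) • pt = _
      rw [hα0, hzero]
      norm_num
    · have hgα : g K = (α K : ℝ) := hαeq K hK
      have hsumg : (∑ J ∈ 𝒥.filter (fun J => J ∩ Pstar = K), t0 J) = (α K : ℝ) := by
        rw [← hgα]
      have hgpos : 0 < ∑ J ∈ 𝒥.filter (fun J => J ∩ Pstar = K), t0 J := by
        rw [hsumg]
        exact_mod_cast Nat.pos_of_ne_zero hα0
      refine ⟨(𝒥.filter (fun J => J ∩ Pstar = K)).centerMass t0
        (fun J => ind (maxElems lt' J)), ?_, ?_⟩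
      · rw [RPPfund]
        refine Finset.centerMass_mem_convexHull _ (fun J _ => htnn J) hgpos fun J hJ => ?_
        obtain ⟨hJm, hJK⟩ := Finset.mem_filter.1 hJ
        exact ⟨J, (hmem𝒥 J).1 hJm, hJK, rfl⟩
      · show (α K : ℝ) • (𝒥.filter (fun J => J ∩ Pstar = K)).centerMass t0
            (fun J => ind (maxElems lt' J)) = _
        rw [Finset.centerMass, smul_smul, hsumg, mul_inv_cancel₀ (Nat.cast_ne_zero.2 hα0),
          one_smul]
  · funext p
    rw [Finset.sum_apply]
    have hstep : ∀ K ∈ 𝒥s,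
        (∑ J ∈ 𝒥.filter (fun J => J ∩ Pstar = K), t0 J • ind (maxElems lt' J)) p
          = ∑ J ∈ 𝒥.filter (fun J => J ∩ Pstar = K), t0 J * ind (maxElems lt' J) p := by
      intro K hK
      rw [Finset.sum_apply]
      exact Finset.sum_congr rfl fun J _ => by simp
    rw [Finset.sum_congr rfl hstep,
      Finset.sum_fiberwise_of_maps_to hmapsto (fun J => t0 J * ind (maxElems lt' J) p),
      htpt p]



/-- For a nonnegative dominant marking `λ` with decomposition coefficients `α`, the marked
relative poset polytope `R_λ(P, lt, lt') = Σ_{K ∈ 𝒥*} α_K · R_{ω_K}(P, lt, lt')` equals the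
intersection of `S · R(P, lt, lt')`, `S = Σ_K α_K`, with the affine subspace
`{x : x_p = λ_p for all p ∈ P*}`. -/
theorem stmt13 {P : Type*} [Fintype P] (lt lt' : P → P → Prop)
    (hltirr : ∀ p, ¬ lt p p) (hlttr : ∀ a b c, lt a b → lt b c → lt a c)
    (hlt'irr : ∀ p, ¬ lt' p p) (hlt'tr : ∀ a b c, lt' a b → lt' b c → lt' a c)
    (hweak : ∀ p q, lt' p q → lt p q)
    (hstar : ∀ J1 J2 : Set P, IsLowerIdeal lt J1 → IsLowerIdeal lt J2 →
      IsLowerIdeal lt (starOp lt' J1 J2))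
    (Pstar : Set P)
    (hmin : ∀ p : P, (∀ q, ¬ lt q p) → p ∈ Pstar)
    (hmax : ∀ p : P, (∀ q, ¬ lt p q) → p ∈ Pstar)
    (hiii : ∀ p ∈ Pstar, ∀ q : P, ¬ lt' p q)
    (lam : P → ℤ) (α : Set P → ℕ)
    (hlamnn : ∀ p ∈ Pstar, 0 ≤ lam p)
    (hdom : ∀ p q : P, p ∈ Pstar → q ∈ Pstar → lt p q → lam q ≤ lam p)
    (hαsupp : ∀ K : Set P, α K ≠ 0 → K ∈ idealsOn lt Pstar ∧ K.Nonempty)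
    (hαchain : ∀ K1 K2 : Set P, α K1 ≠ 0 → α K2 ≠ 0 → K1 ⊆ K2 ∨ K2 ⊆ K1)
    (hαsum : ∀ p ∈ Pstar, lam p =
      ∑ K ∈ (Set.toFinite (idealsOn lt Pstar)).toFinset, (α K : ℤ) * K.indicator 1 p) :
    RPPmarked lt lt' Pstar α =
      dilate (∑ K ∈ (Set.toFinite (idealsOn lt Pstar)).toFinset, α K) (RPP lt lt') ∩
        {x | ∀ p ∈ Pstar, x p = (lam p : ℝ)} := by
  apply Set.Subset.antisymm
  · exact easy_dir hiii lam α hαsum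
  · exact hard_dir hltirr hlttr hlt'tr hweak hstar hiii lam α hαsupp hαchain hαsum
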